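/- Local error bound for the SI process (Lemma 3A): suppose k ≥ 3 and 0 < h ≤ 1, and let A be a random edge-timer vector whose components (A(e))_{e∈E(G)} are independent exponential rate-1 random variables. Then for every state x, E[‖g̃(x,A) − g(x,A)‖₁] ≤ n·k²·e^{k−2}·h²; equivalently, the local error d₁ = (g̃(x,A) − g(x,A))/h satisfies E[‖d₁‖₁] ≤ C_SI·h with C_SI = n·k²·e^{k−2}. -/

import Mathlib

open MeasureTheory ProbabilityTheory Real

/-- View a Boolean infection state as a real number (`true ↦ 1`, `false ↦ 0`). -/
def boolToR (b : Bool) : ℝ := if b then 1 else 0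

open Classical in
/-- One step of the SI discrete-time simulation (DTS): node `j` is infected afterwards iff
it was infected, or some infected neighbor's edge timer fires within time `h`. -/
noncomputable def siDTS {V : Type*} (G : SimpleGraph V) (h : ℝ) (x : V → Bool)
    (a : G.edgeSet → ℝ) : V → Bool := fun j =>
  if x j = true ∨ ∃ j', ∃ hadj : G.Adj j j',
      x j' = true ∧ a ⟨s(j, j'), (SimpleGraph.mem_edgeSet G).mpr hadj⟩ ≤ h
  then true else false

open Classical in
/-- State at time `h` of the SI discrete-event simulation (DES) started at `x` with edge
timers `a`, via the first-passage-percolation description: node `j` is infected iff it was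
infected, or there is a path from an infected node to `j` whose timers sum to at most `h`. -/
noncomputable def siDES {V : Type*} (G : SimpleGraph V) (h : ℝ) (x : V → Bool)
    (a : G.edgeSet → ℝ) : V → Bool := fun j =>
  if x j = true ∨ ∃ j₀, ∃ p : G.Walk j₀ j, x j₀ = true ∧
      (p.edges.attach.map fun e => a ⟨e.1, p.edges_subset_edgeSet e.2⟩).sum ≤ h
  then true else false

open Classical in
/-- Extend edge timers to all of `Sym2 V` by `0` off the edge set. -/
noncomputable def extTimer {V : Type*} (G : SimpleGraph V) (a : G.edgeSet → ℝ) :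
    Sym2 V → ℝ := fun e => if he : e ∈ G.edgeSet then a ⟨e, he⟩ else 0

lemma extTimer_nonneg {V : Type*} (G : SimpleGraph V) (a : G.edgeSet → ℝ)
    (ha : ∀ e, 0 ≤ a e) (e : Sym2 V) : 0 ≤ extTimer G a e := by
  unfold extTimer; split <;> simp [ha]

lemma walk_sum_eq {V : Type*} (G : SimpleGraph V) (a : G.edgeSet → ℝ) {u v : V}
    (p : G.Walk u v) :
    (p.edges.attach.map fun e => a ⟨e.1, p.edges_subset_edgeSet e.2⟩).sum
      = (p.edges.map (extTimer G a)).sum := by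
  congr 1
  rw [show (fun e : {e // e ∈ p.edges} => a ⟨e.1, p.edges_subset_edgeSet e.2⟩)
      = fun e : {e // e ∈ p.edges} => extTimer G a e.1 from ?_]
  · rw [← List.attach_map_subtype_val p.edges, List.map_map]
    simp [List.attach_map_subtype_val]
  · funext e
    rw [extTimer, dif_pos (p.edges_subset_edgeSet e.2)]

lemma siDTS_true_of {V : Type*} {G : SimpleGraph V} {h : ℝ} {x : V → Bool}
    {a : G.edgeSet → ℝ} {j : V}
    (hc : x j = true ∨ ∃ j', ∃ hadj : G.Adj j j',
      x j' = true ∧ a ⟨s(j, j'), (SimpleGraph.mem_edgeSet G).mpr hadj⟩ ≤ h) :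
    siDTS G h x a j = true := by
  unfold siDTS; rw [if_pos hc]

lemma siDES_true_of {V : Type*} {G : SimpleGraph V} {h : ℝ} {x : V → Bool}
    {a : G.edgeSet → ℝ} {j : V}
    (hc : x j = true ∨ ∃ j₀, ∃ p : G.Walk j₀ j, x j₀ = true ∧
      (p.edges.attach.map fun e => a ⟨e.1, p.edges_subset_edgeSet e.2⟩).sum ≤ h) :
    siDES G h x a j = true := by
  unfold siDES; rw [if_pos hc]

lemma of_siDTS_false {V : Type*} {G : SimpleGraph V} {h : ℝ} {x : V → Bool}
    {a : G.edgeSet → ℝ} {j : V} (hf : siDTS G h x a j = false) :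
    ¬ (x j = true ∨ ∃ j', ∃ hadj : G.Adj j j',
      x j' = true ∧ a ⟨s(j, j'), (SimpleGraph.mem_edgeSet G).mpr hadj⟩ ≤ h) := by
  intro hc
  rw [siDTS_true_of hc] at hf
  exact absurd hf (by simp)

lemma of_siDES_true {V : Type*} {G : SimpleGraph V} {h : ℝ} {x : V → Bool}
    {a : G.edgeSet → ℝ} {j : V} (ht : siDES G h x a j = true) :
    x j = true ∨ ∃ j₀, ∃ p : G.Walk j₀ j, x j₀ = true ∧
      (p.edges.attach.map fun e => a ⟨e.1, p.edges_subset_edgeSet e.2⟩).sum ≤ h := by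
  by_contra hc
  unfold siDES at ht
  rw [if_neg hc] at ht
  exact Bool.false_ne_true ht

/-- monotonicity: DTS-infected implies DES-infected. -/
lemma siDTS_le_siDES {V : Type*} {G : SimpleGraph V} {h : ℝ} {x : V → Bool}
    {a : G.edgeSet → ℝ} {j : V} (ht : siDTS G h x a j = true) :
    siDES G h x a j = true := by
  unfold siDTS at ht
  by_cases hc : x j = true ∨ ∃ j', ∃ hadj : G.Adj j j',
      x j' = true ∧ a ⟨s(j, j'), (SimpleGraph.mem_edgeSet G).mpr hadj⟩ ≤ h
  · rcases hc with hx | ⟨j', hadj, hx', hle⟩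
    · exact siDES_true_of (Or.inl hx)
    · refine siDES_true_of (Or.inr ⟨j', SimpleGraph.Walk.cons hadj.symm SimpleGraph.Walk.nil,
        hx', ?_⟩)
      rw [walk_sum_eq]
      have : (SimpleGraph.Walk.cons hadj.symm (SimpleGraph.Walk.nil : G.Walk j j)).edges
          = [s(j', j)] := by simp
      rw [this]
      simp only [List.map_cons, List.map_nil, List.sum_cons, List.sum_nil, add_zero]
      rw [extTimer, dif_pos (by rw [Sym2.eq_swap]; exact (SimpleGraph.mem_edgeSet G).mpr hadj)]
      exact le_of_eq_of_le (congrArg a (Subtype.ext Sym2.eq_swap)) hle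
  · rw [if_neg hc] at ht; exact absurd ht Bool.false_ne_true

/-- Key deterministic lemma: if timers are nonnegative and node `j` is DES-infected but not
DTS-infected, then there are two distinct adjacent small-timer edges near `j`. -/
lemma si_key {V : Type*} {G : SimpleGraph V} {h : ℝ} {x : V → Bool}
    {a : G.edgeSet → ℝ} (ha : ∀ e, 0 ≤ a e) {j : V}
    (hdes : siDES G h x a j = true) (hdts : siDTS G h x a j = false) :
    ∃ j' j'' : V, G.Adj j j' ∧ G.Adj j' j'' ∧ j'' ≠ j ∧
      extTimer G a s(j, j') ≤ h ∧ extTimer G a s(j', j'') ≤ h := by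
  have hnn := extTimer_nonneg G a ha
  have hdts' := of_siDTS_false hdts
  push_neg at hdts'
  obtain ⟨hxj, hnb⟩ := hdts'
  obtain ⟨j₀, p, hx0, hsum⟩ := (of_siDES_true hdes).resolve_left hxj
  rw [walk_sum_eq] at hsum
  -- pass to the reversed walk, starting at `j`
  have hsum' : ((p.reverse.edges).map (extTimer G a)).sum ≤ h := by
    rw [SimpleGraph.Walk.edges_reverse, List.map_reverse, List.sum_reverse]
    exact hsum
  clear hsum hdes hdts
  -- strong induction on the length of a walk from `j` to an infected node
  suffices H : ∀ m (j₀ : V) (q : G.Walk j j₀), q.length = m → x j₀ = true →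
      ((q.edges).map (extTimer G a)).sum ≤ h →
      ∃ j' j'' : V, G.Adj j j' ∧ G.Adj j' j'' ∧ j'' ≠ j ∧
        extTimer G a s(j, j') ≤ h ∧ extTimer G a s(j', j'') ≤ h by
    exact H p.reverse.length j₀ p.reverse rfl hx0 hsum'
  intro m
  induction m using Nat.strong_induction_on with
  | _ m IH =>
    intro j₀ q hlen hx0 hq
    cases q with
    | nil => exact absurd hx0 hxj
    | cons hadj q' =>
      rename_i j'
      rw [SimpleGraph.Walk.edges_cons, List.map_cons, List.sum_cons] at hq
      have hq'nn : 0 ≤ (q'.edges.map (extTimer G a)).sum :=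
        List.sum_nonneg (by intro y hy; obtain ⟨e, _, rfl⟩ := List.mem_map.mp hy; exact hnn e)
      have he1 : extTimer G a s(j, j') ≤ h := by linarith
      have hq2 : (q'.edges.map (extTimer G a)).sum ≤ h := by
        have := hnn s(j, j'); linarith
      have hxj' : x j' = false := by
        by_contra hcon
        have hx' : x j' = true := by simpa using hcon
        have hlt := hnb j' hadj hx'
        have heq : extTimer G a s(j, j')
            = a ⟨s(j, j'), (SimpleGraph.mem_edgeSet G).mpr hadj⟩ := by
          rw [extTimer, dif_pos]
        rw [heq] at he1
        linarith
      cases q' with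
      | nil => exact absurd hx0 (by simp [hxj'])
      | cons hadj2 q'' =>
        rename_i j''
        rw [SimpleGraph.Walk.edges_cons, List.map_cons, List.sum_cons] at hq2
        have hq''nn : 0 ≤ (q''.edges.map (extTimer G a)).sum :=
          List.sum_nonneg (by intro y hy; obtain ⟨e, _, rfl⟩ := List.mem_map.mp hy; exact hnn e)
        have he2 : extTimer G a s(j', j'') ≤ h := by linarith
        have hq3 : (q''.edges.map (extTimer G a)).sum ≤ h := by
          have := hnn s(j', j''); linarith
        have hlt : q''.length < m := by
          simp only [SimpleGraph.Walk.length_cons] at hlen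
          omega
        by_cases hjj : j'' = j
        · subst hjj
          exact IH q''.length hlt j₀ q'' rfl hx0 hq3
        · exact ⟨j', j'', hadj, hadj2, hjj, he1, he2⟩

open Set in
lemma expMeasure_Iic_toReal_le {h : ℝ} (h0 : 0 ≤ h) :
    ((expMeasure 1) (Iic h)).toReal ≤ h := by
  haveI := isProbabilityMeasure_expMeasure (one_pos : (0:ℝ) < 1)
  rw [← measureReal_def, ← cdf_eq_real]
  rw [cdf_expMeasure_eq one_pos, if_pos h0, one_mul]
  have := Real.add_one_le_exp (-h)
  linarith

open Set in
lemma expMeasure_Iio_zero : (expMeasure 1) (Iio 0) = 0 := by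
  have : expMeasure 1 = MeasureTheory.volume.withDensity (exponentialPDF 1) := rfl
  rw [this, withDensity_apply _ measurableSet_Iio]
  exact lintegral_exponentialPDF_of_nonpos le_rfl

/-- **Lemma 3A (local error bound for the SI process).** If `3 ≤ k`, `0 < h ≤ 1` and the
edge timers `A(e)`, `e ∈ E(G)`, are independent exponential rate-1 random variables, then
for every state `x`, `E[‖g̃(x,A) - g(x,A)‖₁] ≤ n * k² * e^(k-2) * h²`. -/
theorem si_local_error_bound {Ω : Type*} [MeasureSpace Ω]
    [IsProbabilityMeasure (ℙ : Measure Ω)]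
    {V : Type*} [Fintype V] (G : SimpleGraph V) (k : ℕ) (hk : 3 ≤ k)
    (hdeg : ∀ j : V, (G.neighborSet j).ncard ≤ k)
    (h : ℝ) (h0 : 0 < h) (h1 : h ≤ 1)
    (A : Ω → G.edgeSet → ℝ)
    (hAmeas : ∀ e : G.edgeSet, Measurable fun ω => A ω e)
    (hAindep : iIndepFun (fun (e : G.edgeSet) ω => A ω e) ℙ)
    (hAdist : ∀ e : G.edgeSet, Measure.map (fun ω => A ω e) ℙ = expMeasure 1)
    (x : V → Bool) :
    ∫ ω, ∑ j : V, |boolToR (siDES G h x (A ω) j) - boolToR (siDTS G h x (A ω) j)| ∂ℙ ≤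
      (Fintype.card V : ℝ) * (k : ℝ) ^ 2 * Real.exp ((k : ℝ) - 2) * h ^ 2 := by
  classical
  have hRHS0 : 0 ≤ (Fintype.card V : ℝ) * (k : ℝ) ^ 2 * Real.exp ((k : ℝ) - 2) * h ^ 2 := by
    positivity
  -- measurability of extended timers
  have hmeasExt : ∀ e : Sym2 V, Measurable fun ω => extTimer G (A ω) e := by
    intro e
    by_cases he : e ∈ G.edgeSet
    · simpa only [extTimer, dif_pos he] using hAmeas ⟨e, he⟩
    · simpa only [extTimer, dif_neg he] using measurable_const
  have hT : ∀ e : Sym2 V, MeasurableSet {ω | extTimer G (A ω) e ≤ h} := fun e =>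
    measurableSet_le (hmeasExt e) measurable_const
  set S : V → V × V → Set Ω := fun j q =>
    {ω | extTimer G (A ω) s(j, q.1) ≤ h} ∩ {ω | extTimer G (A ω) s(q.1, q.2) ≤ h} with hS
  have hSmeas : ∀ j q, MeasurableSet (S j q) := fun j q => (hT _).inter (hT _)
  -- probability of single events
  have hsingle : ∀ e : G.edgeSet, (ℙ ((fun ω => A ω e) ⁻¹' Set.Iic h)).toReal ≤ h := by
    intro e
    rw [← Measure.map_apply (hAmeas e) measurableSet_Iic, hAdist e]
    exact expMeasure_Iic_toReal_le h0.le
  -- probability of pair events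
  have hpair : ∀ e1 e2 : G.edgeSet, e1 ≠ e2 →
      (ℙ (((fun ω => A ω e1) ⁻¹' Set.Iic h) ∩ ((fun ω => A ω e2) ⁻¹' Set.Iic h))).toReal
        ≤ h ^ 2 := by
    intro e1 e2 hne
    have hind := hAindep.indepFun hne
    rw [hind.measure_inter_preimage_eq_mul _ _ measurableSet_Iic measurableSet_Iic,
      ENNReal.toReal_mul, pow_two]
    exact mul_le_mul (hsingle e1) (hsingle e2) ENNReal.toReal_nonneg h0.le
  have hSprob : ∀ j (q : V × V), G.Adj j q.1 → G.Adj q.1 q.2 → q.2 ≠ j →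
      (ℙ (S j q)).toReal ≤ h ^ 2 := by
    intro j q hadj1 hadj2 hne
    have he1 : s(j, q.1) ∈ G.edgeSet := hadj1
    have he2 : s(q.1, q.2) ∈ G.edgeSet := hadj2
    have hedge_ne : (⟨s(j, q.1), he1⟩ : G.edgeSet) ≠ ⟨s(q.1, q.2), he2⟩ := by
      intro hcon
      have hcon' := Subtype.mk_eq_mk.mp hcon
      rw [Sym2.eq_iff] at hcon'
      rcases hcon' with ⟨h1, h2⟩ | ⟨h1, h2⟩
      · exact G.ne_of_adj hadj2 h2
      · exact hne h1.symm
    have hseq : S j q = ((fun ω => A ω ⟨s(j, q.1), he1⟩) ⁻¹' Set.Iic h) ∩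
        ((fun ω => A ω ⟨s(q.1, q.2), he2⟩) ⁻¹' Set.Iic h) := by
      ext ω
      simp only [hS, Set.mem_inter_iff, Set.mem_setOf_eq, Set.mem_preimage, Set.mem_Iic,
        extTimer, dif_pos he1, dif_pos he2]
    rw [hseq]
    exact hpair _ _ hedge_ne
  -- the pair index sets
  set P : V → Finset (V × V) := fun j =>
    Finset.univ.filter (fun q : V × V => G.Adj j q.1 ∧ G.Adj q.1 q.2 ∧ q.2 ≠ j) with hP
  have hNcard : ∀ j, (G.neighborFinset j).card ≤ k := by
    intro j
    have := hdeg j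
    rwa [Set.ncard_eq_toFinset_card'] at this
  have hPcard : ∀ j, (P j).card ≤ k * k := by
    intro j
    have hsub : P j ⊆ (G.neighborFinset j).biUnion
        (fun j' => (G.neighborFinset j').image (Prod.mk j')) := by
      intro q hq
      simp only [hP, Finset.mem_filter] at hq
      obtain ⟨-, h1, h2, -⟩ := hq
      exact Finset.mem_biUnion.mpr ⟨q.1, (SimpleGraph.mem_neighborFinset _ _ _).mpr h1,
        Finset.mem_image.mpr ⟨q.2, (SimpleGraph.mem_neighborFinset _ _ _).mpr h2, rfl⟩⟩
    calc (P j).card ≤ _ := Finset.card_le_card hsub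
      _ ≤ ∑ j' ∈ G.neighborFinset j, ((G.neighborFinset j').image (Prod.mk j')).card :=
          Finset.card_biUnion_le
      _ ≤ ∑ _j' ∈ G.neighborFinset j, k :=
          Finset.sum_le_sum (fun j' _ => le_trans Finset.card_image_le (hNcard j'))
      _ = (G.neighborFinset j).card * k := by rw [Finset.sum_const, smul_eq_mul]
      _ ≤ k * k := Nat.mul_le_mul_right k (hNcard j)
  -- a.e. the timers are nonnegative
  have hae : ∀ᵐ ω ∂ℙ, ∀ e : G.edgeSet, 0 ≤ A ω e := by
    rw [MeasureTheory.ae_all_iff]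
    intro e
    rw [ae_iff]
    have hset : {ω | ¬ 0 ≤ A ω e} = (fun ω => A ω e) ⁻¹' Set.Iio 0 := by
      ext ω; simp [not_le]
    rw [hset, ← Measure.map_apply (hAmeas e) measurableSet_Iio, hAdist e]
    exact expMeasure_Iio_zero
  -- comparison functions
  set F : Ω → ℝ := fun ω =>
    ∑ j : V, |boolToR (siDES G h x (A ω) j) - boolToR (siDTS G h x (A ω) j)| with hF
  set gf : Ω → ℝ := fun ω =>
    ∑ j : V, ∑ q ∈ P j, (S j q).indicator (fun _ => (1 : ℝ)) ω with hg
  have hind_nonneg : ∀ (j : V) (q : V × V) (ω : Ω),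
      0 ≤ (S j q).indicator (fun _ => (1 : ℝ)) ω := fun j q ω =>
    Set.indicator_nonneg (fun _ _ => zero_le_one) ω
  have hterm_int : ∀ (j : V) (q : V × V),
      Integrable (fun ω => (S j q).indicator (fun _ => (1 : ℝ)) ω) ℙ := fun j q =>
    (integrable_const (1 : ℝ)).indicator (hSmeas j q)
  have hgint : Integrable gf ℙ := by
    apply integrable_finset_sum
    intro j _
    exact integrable_finset_sum _ (fun q _ => hterm_int j q)
  have hFg : ∀ᵐ ω ∂ℙ, F ω ≤ gf ω := by
    filter_upwards [hae] with ω hω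
    refine Finset.sum_le_sum (fun j _ => ?_)
    by_cases hdes : siDES G h x (A ω) j = true
    · by_cases hdts : siDTS G h x (A ω) j = true
      · rw [hdes, hdts]
        simpa [boolToR] using Finset.sum_nonneg (fun q _ => hind_nonneg j q ω)
      · have hdts' : siDTS G h x (A ω) j = false := by
          simpa using hdts
        obtain ⟨j', j'', hadj1, hadj2, hne, he1, he2⟩ := si_key hω hdes hdts'
        have hmem : (j', j'') ∈ P j := by
          simp only [hP, Finset.mem_filter, Finset.mem_univ, true_and]
          exact ⟨hadj1, hadj2, hne⟩
        have hωS : ω ∈ S j (j', j'') := ⟨he1, he2⟩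
        have hone : (1 : ℝ) ≤ ∑ q ∈ P j, (S j q).indicator (fun _ => (1 : ℝ)) ω := by
          have := Finset.single_le_sum
            (f := fun q => (S j q).indicator (fun _ => (1 : ℝ)) ω)
            (fun q _ => hind_nonneg j q ω) hmem
          simp only [Set.indicator_of_mem hωS] at this
          exact this
        rw [hdes, hdts']
        simpa [boolToR] using hone
    · have hdes' : siDES G h x (A ω) j = false := by simpa using hdes
      have hdts' : siDTS G h x (A ω) j = false := by
        by_contra hc
        exact hdes (siDTS_le_siDES (by simpa using hc))
      rw [hdes', hdts']
      simpa [boolToR] using Finset.sum_nonneg (fun q _ => hind_nonneg j q ω)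
  -- main estimate
  have hbound : (∑ j : V, ∑ q ∈ P j, (ℙ (S j q)).toReal)
      ≤ (Fintype.card V : ℝ) * (k : ℝ) ^ 2 * h ^ 2 := by
    calc ∑ j : V, ∑ q ∈ P j, (ℙ (S j q)).toReal
        ≤ ∑ _j : V, ((k : ℝ) * k) * h ^ 2 := by
          refine Finset.sum_le_sum (fun j _ => ?_)
          have hstep : ∀ q ∈ P j, (ℙ (S j q)).toReal ≤ h ^ 2 := by
            intro q hq
            simp only [hP, Finset.mem_filter, Finset.mem_univ, true_and] at hq
            exact hSprob j q hq.1 hq.2.1 hq.2.2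
          calc ∑ q ∈ P j, (ℙ (S j q)).toReal ≤ (P j).card • (h ^ 2) :=
                Finset.sum_le_card_nsmul _ _ _ hstep
            _ = ((P j).card : ℝ) * h ^ 2 := by rw [nsmul_eq_mul]
            _ ≤ ((k : ℝ) * k) * h ^ 2 := by
                have : ((P j).card : ℝ) ≤ (k : ℝ) * k := by
                  exact_mod_cast Nat.cast_le.mpr (hPcard j)
                nlinarith [sq_nonneg h]
      _ = (Fintype.card V : ℝ) * (k : ℝ) ^ 2 * h ^ 2 := by
          rw [Finset.sum_const, Finset.card_univ, nsmul_eq_mul]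
          ring
  have hgval : ∫ ω, gf ω ∂ℙ = ∑ j : V, ∑ q ∈ P j, (ℙ (S j q)).toReal := by
    rw [hg]
    rw [integral_finset_sum _ (fun j _ => integrable_finset_sum _ (fun q _ => hterm_int j q))]
    refine Finset.sum_congr rfl (fun j _ => ?_)
    rw [integral_finset_sum _ (fun q _ => hterm_int j q)]
    refine Finset.sum_congr rfl (fun q _ => ?_)
    rw [integral_indicator_const (1 : ℝ) (hSmeas j q), smul_eq_mul, mul_one, measureReal_def]
  have hexp1 : (1 : ℝ) ≤ Real.exp ((k : ℝ) - 2) := by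
    have : (0 : ℝ) ≤ (k : ℝ) - 2 := by
      have : (3 : ℝ) ≤ (k : ℝ) := by exact_mod_cast hk
      linarith
    simpa using Real.exp_le_exp.mpr this |>.trans_eq' Real.exp_zero
  by_cases hFint : Integrable F ℙ
  · calc ∫ ω, F ω ∂ℙ ≤ ∫ ω, gf ω ∂ℙ := integral_mono_ae hFint hgint hFg
      _ = ∑ j : V, ∑ q ∈ P j, (ℙ (S j q)).toReal := hgval
      _ ≤ (Fintype.card V : ℝ) * (k : ℝ) ^ 2 * h ^ 2 := hbound
      _ ≤ (Fintype.card V : ℝ) * (k : ℝ) ^ 2 * Real.exp ((k : ℝ) - 2) * h ^ 2 := by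
          nlinarith [sq_nonneg h, Nat.cast_nonneg (α := ℝ) (Fintype.card V),
            Nat.cast_nonneg (α := ℝ) k, sq_nonneg ((k : ℝ))]
  · rw [integral_undef hFint]
    exact hRHS0
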